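/- Let R be a ring and write (-)^+ = Hom_ℤ(-, ℚ/ℤ) (the character module). Let C be a class of left R-modules, all of which are pure injective, and D a class of right R-modules such that X^+ ∈ D for every X ∈ C. If f : A → C is a homomorphism of left R-modules with C ∈ C such that f^+ : C^+ → A^+ is a D-precover of A^+, then f is a C-preenvelope of A. -/

import Mathlib

universe u

/-! Common definitions: character modules, purity, pure injectivity. -/

open MulOpposite


/-- The character group `M⁺ = Hom_ℤ(M, ℚ/ℤ)`. -/
def CharMod (M : Type u) [AddCommGroup M] : Type u := M →+ AddCircle (1 : ℚ)

instance (M : Type u) [AddCommGroup M] : AddCommGroup (CharMod M) :=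
  inferInstanceAs (AddCommGroup (M →+ AddCircle (1 : ℚ)))

instance (M : Type u) [AddCommGroup M] : FunLike (CharMod M) M (AddCircle (1 : ℚ)) :=
  inferInstanceAs (FunLike (M →+ AddCircle (1 : ℚ)) M (AddCircle (1 : ℚ)))

instance (M : Type u) [AddCommGroup M] :
    AddMonoidHomClass (CharMod M) M (AddCircle (1 : ℚ)) :=
  inferInstanceAs (AddMonoidHomClass (M →+ AddCircle (1 : ℚ)) M (AddCircle (1 : ℚ)))

/-- If `M` is a left `R`-module, `M⁺` is a right `R`-module via `(c • r) m = c (r • m)`. -/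
instance CharMod.moduleOp (R : Type v) [Ring R] (M : Type u) [AddCommGroup M] [Module R M] :
    Module Rᵐᵒᵖ (CharMod M) where
  smul r c := (c : M →+ AddCircle (1 : ℚ)).comp (DistribMulAction.toAddMonoidHom M r.unop)
  one_smul c := AddMonoidHom.ext fun m => congrArg c (one_smul R m)
  mul_smul r s c := AddMonoidHom.ext fun m => congrArg c (mul_smul s.unop r.unop m)
  smul_zero r := rfl
  smul_add r c d := rfl
  add_smul r s c := AddMonoidHom.ext fun m => by
    show c ((r.unop + s.unop) • m) = c (r.unop • m) + c (s.unop • m)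
    rw [add_smul, map_add]
  zero_smul c := AddMonoidHom.ext fun m => by
    show c ((0 : R) • m) = 0
    rw [zero_smul, map_zero]

@[simp] lemma CharMod.op_smul_apply {R : Type v} [Ring R] {M : Type u} [AddCommGroup M]
    [Module R M] (r : Rᵐᵒᵖ) (c : CharMod M) (m : M) : (r • c) m = c (r.unop • m) := rfl

/-- If `N` is a right `R`-module, `N⁺` is a left `R`-module via `(r • c) n = c (n • r)`. -/
instance CharMod.moduleUnop (R : Type v) [Ring R] (N : Type u) [AddCommGroup N] [Module Rᵐᵒᵖ N] :
    Module R (CharMod N) where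
  smul r c := (c : N →+ AddCircle (1 : ℚ)).comp (DistribMulAction.toAddMonoidHom N (op r))
  one_smul c := AddMonoidHom.ext fun n => congrArg c (one_smul Rᵐᵒᵖ n)
  mul_smul r s c := AddMonoidHom.ext fun n => by
    show c ((op (r * s)) • n) = c (op s • op r • n)
    rw [← mul_smul]; rfl
  smul_zero r := rfl
  smul_add r c d := rfl
  add_smul r s c := AddMonoidHom.ext fun n => by
    show c ((op (r + s)) • n) = c (op r • n) + c (op s • n)
    rw [show op (r + s) = op r + op s from rfl, add_smul, map_add]
  zero_smul c := AddMonoidHom.ext fun n => by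
    show c ((op (0 : R)) • n) = 0
    rw [show op (0 : R) = (0 : Rᵐᵒᵖ) from rfl, zero_smul, map_zero]

@[simp] lemma CharMod.unop_smul_apply {R : Type v} [Ring R] {N : Type u} [AddCommGroup N]
    [Module Rᵐᵒᵖ N] (r : R) (c : CharMod N) (n : N) : (r • c) n = c (op r • n) := rfl

/-- The dual `f⁺ : C⁺ → A⁺` of a map `f : A → C` of left `R`-modules. -/
def charDual {R : Type v} [Ring R] {A C : Type u} [AddCommGroup A] [Module R A]
    [AddCommGroup C] [Module R C] (f : A →ₗ[R] C) : CharMod C →ₗ[Rᵐᵒᵖ] CharMod A where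
  toFun c := (c : C →+ AddCircle (1 : ℚ)).comp f.toAddMonoidHom
  map_add' _ _ := rfl
  map_smul' r c := AddMonoidHom.ext fun a => (congrArg c (f.map_smul r.unop a)).symm

/-- The canonical evaluation map `σ_M : M → M⁺⁺`. -/
def charEval (R : Type v) [Ring R] (M : Type u) [AddCommGroup M] [Module R M] :
    M →ₗ[R] CharMod (CharMod M) where
  toFun m :=
    { toFun := fun c => c m
      map_zero' := rfl
      map_add' := fun _ _ => rfl }
  map_add' m m' := AddMonoidHom.ext fun c => c.map_add m m'
  map_smul' r m := AddMonoidHom.ext fun c => rfl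

/-- A linear map `i : M → N` is a pure monomorphism if it is injective and every
map from a finitely presented module to `N ⧸ im i` lifts to `N`, i.e. the short exact
sequence `0 → M → N → N ⧸ im i → 0` remains exact after applying `Hom(F, -)` for all
finitely presented `F`. -/
def IsPureMono {R : Type v} [Ring R] {M N : Type u} [AddCommGroup M] [Module R M]
    [AddCommGroup N] [Module R N] (i : M →ₗ[R] N) : Prop :=
  Function.Injective i ∧
    ∀ (F : Type u) [AddCommGroup F] [Module R F], Module.FinitePresentation R F →
      ∀ g : F →ₗ[R] (N ⧸ LinearMap.range i),
        ∃ h : F →ₗ[R] N, (LinearMap.range i).mkQ.comp h = g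

/-- A module `E` is pure injective if every map to `E` extends along pure monomorphisms. -/
def IsPureInjective (R : Type v) [Ring R] (E : Type u) [AddCommGroup E] [Module R E] : Prop :=
  ∀ (M N : Type u) [AddCommGroup M] [Module R M] [AddCommGroup N] [Module R N]
    (i : M →ₗ[R] N), IsPureMono i →
      ∀ f : M →ₗ[R] E, ∃ g : N →ₗ[R] E, g.comp i = f


/-! ### Auxiliary lemmas -/

section Aux

open Finsupp

/-- Characters separate points. -/
lemma CharMod.exists_ne_zero {M : Type u} [AddCommGroup M] {m : M} (hm : m ≠ 0) :
    ∃ c : CharMod M, c m ≠ 0 := by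
  obtain ⟨c, hc⟩ := CharacterModule.exists_character_apply_ne_zero_of_ne_zero hm
  exact ⟨c, hc⟩

lemma CharMod.sum_apply {M : Type u} [AddCommGroup M] {ι : Type*} (s : Finset ι)
    (f : ι → CharMod M) (m : M) : (∑ i ∈ s, f i) m = ∑ i ∈ s, f i m := by
  classical
  induction s using Finset.induction_on with
  | empty => rfl
  | insert _ _ h ih =>
    rw [Finset.sum_insert h, Finset.sum_insert h, ← ih]
    rfl

lemma charEval_injective (R : Type v) [Ring R] (X : Type u) [AddCommGroup X] [Module R X] :
    Function.Injective (charEval R X) := by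
  intro a b hab
  by_contra hne
  obtain ⟨c, hc⟩ := CharMod.exists_ne_zero (sub_ne_zero.mpr hne)
  have h2 : c a = c b := congrArg (fun φ : CharMod (CharMod X) => φ c) hab
  apply hc
  rw [map_sub, h2, sub_self]

variable {R : Type v} [Ring R]

lemma lc_piSingle {X : Type u} [AddCommGroup X] [Module R X] {ι : Type w} [DecidableEq ι]
    (i : ι) (x : X) (l : ι →₀ R) :
    Finsupp.linearCombination R (Pi.single i x) l = l i • x := by
  rw [Finsupp.linearCombination_apply]
  rw [Finsupp.sum_eq_single i (fun j _ hj => by rw [Pi.single_eq_of_ne hj, smul_zero])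
    (fun _ => by rw [zero_smul])]
  rw [Pi.single_eq_same]

lemma lc_zero_left {X : Type u} [AddCommGroup X] [Module R X] {ι : Type w} (l : ι →₀ R) :
    Finsupp.linearCombination R (0 : ι → X) l = 0 := by
  simp [Finsupp.linearCombination_apply, Finsupp.sum]

lemma lc_add_left {X : Type u} [AddCommGroup X] [Module R X] {ι : Type w} (z z' : ι → X)
    (l : ι →₀ R) :
    Finsupp.linearCombination R (z + z') l
      = Finsupp.linearCombination R z l + Finsupp.linearCombination R z' l := by
  simp [Finsupp.linearCombination_apply, Finsupp.sum, smul_add, Finset.sum_add_distrib]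

lemma lc_neg_left {X : Type u} [AddCommGroup X] [Module R X] {ι : Type w} (z : ι → X)
    (l : ι →₀ R) :
    Finsupp.linearCombination R (-z) l = - Finsupp.linearCombination R z l := by
  simp [Finsupp.linearCombination_apply, Finsupp.sum, smul_neg, Finset.sum_neg_distrib]

end Aux

/-- The evaluation map `σ_X : X → X⁺⁺` is a pure monomorphism. -/
lemma charEval_isPureMono (R : Type u) [Ring R] (X : Type u) [AddCommGroup X] [Module R X] :
    IsPureMono (charEval R X) := by
  classical
  refine ⟨charEval_injective R X, ?_⟩
  intro F _ _ fp g
  obtain ⟨s, hspan, hker⟩ := fp.out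
  let π : (↥s →₀ R) →ₗ[R] F := Finsupp.linearCombination R ((↑) : ↥s → F)
  have hπ : Function.Surjective π := by
    rw [← LinearMap.range_eq_top]
    show LinearMap.range (Finsupp.linearCombination R ((↑) : ↥s → F)) = ⊤
    rw [Finsupp.range_linearCombination, Subtype.range_coe]
    exact hspan
  obtain ⟨t, ht⟩ := hker
  have hy : ∀ i : ↥s, ∃ yy : CharMod (CharMod X),
      Submodule.mkQ (LinearMap.range (charEval R X)) yy = g ↑i :=
    fun i => Submodule.mkQ_surjective _ _
  choose y hy using hy
  let Y : (↥s →₀ R) →ₗ[R] CharMod (CharMod X) := Finsupp.linearCombination R y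
  have hYg : ∀ v, Submodule.mkQ (LinearMap.range (charEval R X)) (Y v) = g (π v) := by
    have : (Submodule.mkQ (LinearMap.range (charEval R X))).comp Y = g.comp π := by
      apply Finsupp.lhom_ext
      intro i r
      simp only [LinearMap.comp_apply, Y, π, Finsupp.linearCombination_single, map_smul, hy]
    intro v
    exact DFunLike.congr_fun this v
  have hw : ∀ k : ↥t, ∃ ww : X, charEval R X ww = Y ↑k := by
    intro k
    have hk : (k : ↥s →₀ R) ∈ LinearMap.ker π := by
      rw [← ht]; exact Submodule.subset_span k.2
    have h0 : Submodule.mkQ (LinearMap.range (charEval R X)) (Y ↑k) = 0 := by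
      rw [hYg, LinearMap.mem_ker.mp hk, map_zero]
    rwa [Submodule.mkQ_apply, Submodule.Quotient.mk_eq_zero, LinearMap.mem_range] at h0
  choose w hwspec using hw
  have hsolv : ∃ z : ↥s → X, ∀ k : ↥t, Finsupp.linearCombination R z ↑k = w k := by
    by_contra hno
    push_neg at hno
    let S : AddSubgroup (↥t → X) :=
      { carrier := {u | ∃ z : ↥s → X, ∀ k : ↥t, Finsupp.linearCombination R z ↑k = u k}
        zero_mem' := ⟨0, fun k => lc_zero_left _⟩
        add_mem' := fun {u1 u2} h1 h2 => by
          obtain ⟨z1, hz1⟩ := h1; obtain ⟨z2, hz2⟩ := h2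
          exact ⟨z1 + z2, fun k => by rw [lc_add_left, hz1, hz2]; rfl⟩
        neg_mem' := fun {u} h => by
          obtain ⟨z1, hz1⟩ := h
          exact ⟨-z1, fun k => by rw [lc_neg_left, hz1]; rfl⟩ }
    have hwS : w ∉ S := by
      rintro ⟨z, hz⟩
      obtain ⟨k, hk⟩ := hno z
      exact hk (hz k)
    have hq : (QuotientAddGroup.mk' S) w ≠ 0 := by
      rw [Ne, QuotientAddGroup.mk'_apply, QuotientAddGroup.eq_zero_iff]
      exact hwS
    obtain ⟨c0, hc0⟩ := CharacterModule.exists_character_apply_ne_zero_of_ne_zero hq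
    let c0' : ((↥t → X) ⧸ S) →+ AddCircle (1 : ℚ) := c0
    let χ : (↥t → X) →+ AddCircle (1 : ℚ) := c0'.comp (QuotientAddGroup.mk' S)
    have hχS : ∀ u ∈ S, χ u = 0 := by
      intro u hu
      show c0' ((QuotientAddGroup.mk' S) u) = 0
      rw [show (QuotientAddGroup.mk' S) u = 0 from (QuotientAddGroup.eq_zero_iff u).mpr hu,
        map_zero]
    have hχw : χ w ≠ 0 := hc0
    let χk : ↥t → CharMod X := fun k => χ.comp (AddMonoidHom.single (fun _ : ↥t => X) k)
    have hψ : ∀ i : ↥s,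
        (∑ k : ↥t, (op ((k : ↥s →₀ R) i) • χk k)) = (0 : CharMod X) := by
      intro i
      refine DFunLike.ext _ _ fun x => ?_
      rw [CharMod.sum_apply]
      have h1 : ∀ k : ↥t,
          (op ((k : ↥s →₀ R) i) • χk k) x = χ (Pi.single k (((k : ↥s →₀ R) i) • x)) :=
        fun k => rfl
      rw [Finset.sum_congr rfl fun k _ => h1 k, ← map_sum χ,
        Finset.univ_sum_single (fun k : ↥t => ((k : ↥s →₀ R) i) • x)]
      show χ _ = (0 : CharMod X) x
      rw [hχS _ ⟨Pi.single i x, fun k => lc_piSingle (R := R) (X := X) i x (k : ↥s →₀ R)⟩]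
      rfl
    have key : (0 : AddCircle (1 : ℚ)) = χ w := by
      calc (0 : AddCircle (1 : ℚ))
          = ∑ i : ↥s, (y i) (∑ k : ↥t, op ((k : ↥s →₀ R) i) • χk k) := by
            rw [Finset.sum_congr rfl fun i _ => by rw [hψ i, map_zero]]
            rw [Finset.sum_const_zero]
        _ = ∑ i : ↥s, ∑ k : ↥t, (y i) (op ((k : ↥s →₀ R) i) • χk k) :=
            Finset.sum_congr rfl fun i _ => map_sum (y i) _ _
        _ = ∑ k : ↥t, ∑ i : ↥s, ((((k : ↥s →₀ R) i) • y i)) (χk k) := Finset.sum_comm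
        _ = ∑ k : ↥t, (∑ i : ↥s, (((k : ↥s →₀ R) i) • y i)) (χk k) :=
            Finset.sum_congr rfl fun k _ => (CharMod.sum_apply _ _ _).symm
        _ = ∑ k : ↥t, (Y ↑k) (χk k) := by
            refine Finset.sum_congr rfl fun k _ => ?_
            congr 1
            show _ = Finsupp.linearCombination R y (k : ↥s →₀ R)
            rw [Finsupp.linearCombination_apply,
              Finsupp.sum_fintype _ _ (fun i => zero_smul R (y i))]
        _ = ∑ k : ↥t, χk k (w k) := by
            refine Finset.sum_congr rfl fun k _ => ?_
            rw [← hwspec k]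
            rfl
        _ = χ (∑ k : ↥t, Pi.single k (w k)) := (map_sum χ _ _).symm
        _ = χ w := by rw [Finset.univ_sum_single]
    exact hχw key.symm
  obtain ⟨z, hz⟩ := hsolv
  let Z : (↥s →₀ R) →ₗ[R] X := Finsupp.linearCombination R z
  let H : (↥s →₀ R) →ₗ[R] CharMod (CharMod X) := Y - (charEval R X).comp Z
  have hkerH : LinearMap.ker π ≤ LinearMap.ker H := by
    rw [← ht, Submodule.span_le]
    intro k hk
    simp only [SetLike.mem_coe, LinearMap.mem_ker]
    show Y k - (charEval R X) (Z k) = 0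
    have hzk : Z k = w ⟨k, hk⟩ := hz ⟨k, hk⟩
    rw [hzk, hwspec ⟨k, hk⟩, sub_self]
  let e := LinearMap.quotKerEquivOfSurjective π hπ
  refine ⟨(Submodule.liftQ (LinearMap.ker π) H hkerH).comp e.symm.toLinearMap, ?_⟩
  apply LinearMap.ext
  intro x
  obtain ⟨v, rfl⟩ := hπ x
  have he : e.symm (π v) = Submodule.Quotient.mk v := by
    rw [LinearEquiv.symm_apply_eq]
    rfl
  simp only [LinearMap.comp_apply, LinearEquiv.coe_coe]
  rw [he, Submodule.liftQ_apply]
  show Submodule.mkQ (LinearMap.range (charEval R X)) (H v) = g (π v)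
  have hH : H v = Y v - (charEval R X) (Z v) := rfl
  rw [hH, map_sub, hYg]
  have hz0 : Submodule.mkQ (LinearMap.range (charEval R X)) ((charEval R X) (Z v)) = 0 := by
    rw [Submodule.mkQ_apply, Submodule.Quotient.mk_eq_zero]
    exact ⟨Z v, rfl⟩
  rw [hz0, sub_zero]

/-- The dual `h⁺ : N'⁺ → N⁺` of a map `h : N → N'` of right `R`-modules. -/
def charDualOp {R : Type v} [Ring R] {N N' : Type u} [AddCommGroup N] [Module Rᵐᵒᵖ N]
    [AddCommGroup N'] [Module Rᵐᵒᵖ N'] (h : N →ₗ[Rᵐᵒᵖ] N') : CharMod N' →ₗ[R] CharMod N where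
  toFun c := (c : N' →+ AddCircle (1 : ℚ)).comp h.toAddMonoidHom
  map_add' _ _ := rfl
  map_smul' r c := AddMonoidHom.ext fun n => (congrArg c (h.map_smul (op r) n)).symm

/-- **Theorem 1.2 / 3.2.** Let `𝒞` be a class of left `R`-modules, all pure injective, and `𝒟`
a class of right `R`-modules with `𝒞⁺ ⊆ 𝒟`. If `f : A → C` with `C ∈ 𝒞` is such that
`f⁺ : C⁺ → A⁺` is a `𝒟`-precover of `A⁺`, then `f` is a `𝒞`-preenvelope of `A`. -/
theorem stmt1 {R : Type u} [Ring R] {A C : Type u}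
    [AddCommGroup A] [Module R A] [AddCommGroup C] [Module R C]
    (𝒞 : ∀ (X : Type u) [AddCommGroup X] [Module R X], Prop)
    (𝒟 : ∀ (Y : Type u) [AddCommGroup Y] [Module Rᵐᵒᵖ Y], Prop)
    (hCD : ∀ (X : Type u) [AddCommGroup X] [Module R X], 𝒞 X → 𝒟 (CharMod X))
    (hPI : ∀ (X : Type u) [AddCommGroup X] [Module R X], 𝒞 X → IsPureInjective R X)
    (hC : 𝒞 C) (f : A →ₗ[R] C)
    -- `f⁺ : C⁺ → A⁺` is a `𝒟`-precover of `A⁺`: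
    (hdom : 𝒟 (CharMod C))
    (hfact : ∀ (Y : Type u) [AddCommGroup Y] [Module Rᵐᵒᵖ Y], 𝒟 Y →
      ∀ g : Y →ₗ[Rᵐᵒᵖ] CharMod A, ∃ h : Y →ₗ[Rᵐᵒᵖ] CharMod C, (charDual f).comp h = g) :
    -- `f` is a `𝒞`-preenvelope of `A`:
    ∀ (X : Type u) [AddCommGroup X] [Module R X], 𝒞 X →
      ∀ g : A →ₗ[R] X, ∃ h : C →ₗ[R] X, h.comp f = g := by
  intro X _ _ hX g
  obtain ⟨hmap, hcomp⟩ := hfact (CharMod X) (hCD X hX) (charDual g)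
  obtain ⟨r, hr⟩ := hPI X hX X (CharMod (CharMod X)) (charEval R X)
    (charEval_isPureMono R X) LinearMap.id
  refine ⟨(r.comp (charDualOp hmap)).comp (charEval R C), ?_⟩
  apply LinearMap.ext
  intro a
  have hkey : charDualOp hmap (charEval R C (f a)) = charEval R X (g a) := by
    refine AddMonoidHom.ext fun χ => ?_
    show (hmap χ) (f a) = χ (g a)
    have h1 : (charDual f) (hmap χ) = charDual g χ := DFunLike.congr_fun hcomp χ
    have h2 : ((charDual f) (hmap χ)) a = (charDual g χ) a := DFunLike.congr_fun h1 a
    exact h2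
  show r (charDualOp hmap (charEval R C (f a))) = g a
  rw [hkey]
  exact DFunLike.congr_fun hr (g a)
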